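/- Let H be a bialgebra over a field of characteristic zero (or over a commutative ℚ-algebra). If g ∈ H is group-like (Δg = g ⊗ g and ε(g) = 1) and g − 1 is nilpotent, then log(g) := Σ_{k≥1} (−1)^{k+1}(g−1)^k/k (a finite sum) is primitive: Δ(log g) = log(g) ⊗ 1 + 1 ⊗ log(g). This is the inverse direction of the statement that the exponential map restricts to a bijection from (truncated) primitive elements onto (truncated) group-like elements, with inverse the logarithm. -/

import Mathlib

/-! Statement 8: the logarithm of a group-like element `g` of a bialgebra over a field
of characteristic zero, with `g - 1` nilpotent, is primitive. -/

open scoped TensorProduct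

section Aux

open Polynomial Finset

variable {K : Type*} [Field K] [CharZero K]


lemma logSum_trunc {A : Type*} [Ring A] [Algebra K A] (x : A) {n N : ℕ} (hx : x ^ n = 0)
    (h : n ≤ N) :
    ∑ k ∈ Finset.range N, ((-1 : K) ^ k * ((k : K) + 1)⁻¹) • x ^ (k + 1) =
      ∑ k ∈ Finset.range n, ((-1 : K) ^ k * ((k : K) + 1)⁻¹) • x ^ (k + 1) := by
  symm
  apply Finset.sum_subset (Finset.range_subset_range.2 h)
  intro k _ hk
  have hnk : n ≤ k + 1 := by
    have := Finset.mem_range.not.1 hk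
    omega
  rw [pow_eq_zero_of_le hnk hx, smul_zero]

lemma logSum_add_of_comm {A : Type*} [CommRing A] [Algebra K A] (a b : A) (n : ℕ)
    (ha : a ^ n = 0) (hb : b ^ n = 0) :
    ∑ k ∈ range (2 * n), ((-1 : K) ^ k * ((k : K) + 1)⁻¹) • (a + b + a * b) ^ (k + 1) =
      ∑ k ∈ range (2 * n), ((-1 : K) ^ k * ((k : K) + 1)⁻¹) • a ^ (k + 1) +
        ∑ k ∈ range (2 * n), ((-1 : K) ^ k * ((k : K) + 1)⁻¹) • b ^ (k + 1) := by
  rcases Nat.eq_zero_or_pos n with rfl | hnpos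
  · simp
  set N := 2 * n with hN
  set φ : ℕ → A := fun k => algebraMap K A ((-1 : K) ^ k * ((k : K) + 1)⁻¹) with hφ
  set P : A[X] := ∑ k ∈ range N, C (φ k) * X ^ (k + 1) with hP
  have hPeval : ∀ x : A,
      P.eval x = ∑ k ∈ range N, ((-1 : K) ^ k * ((k : K) + 1)⁻¹) • x ^ (k + 1) := by
    intro x
    rw [hP, eval_finset_sum]
    refine Finset.sum_congr rfl fun k _ => ?_
    simp [hφ, Algebra.smul_def]
  set u : A[X] := C (1 + b) * X + C b with hu
  set H : A[X] := P.comp u - P - C (P.eval b) with hH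
  -- derivative of P is the truncated geometric series
  have hDP : derivative P = ∑ k ∈ range N, (-X : A[X]) ^ k := by
    rw [hP, derivative_sum]
    refine Finset.sum_congr rfl fun k _ => ?_
    rw [derivative_C_mul, derivative_X_pow]
    have h1 : ((k + 1 : ℕ) : A[X]) = C ((k + 1 : ℕ) : A) := by simp
    have hk : ((-1 : K) ^ k * ((k : K) + 1)⁻¹) * ((k + 1 : ℕ) : K) = (-1 : K) ^ k := by
      have hne : ((k : K) + 1) ≠ 0 := Nat.cast_add_one_ne_zero k
      push_cast
      field_simp
    have h2 : φ k * ((k + 1 : ℕ) : A) = (-1 : A) ^ k := by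
      have hcast : ((k + 1 : ℕ) : A) = algebraMap K A ((k + 1 : ℕ) : K) := by simp
      rw [hφ, hcast, ← map_mul, hk]
      simp [map_pow]
    calc C (φ k) * (((k+1 : ℕ) : A[X]) * X ^ (k + 1 - 1))
        = C (φ k * ((k+1 : ℕ) : A)) * X ^ k := by
          rw [map_mul, h1, Nat.add_sub_cancel]; ring
      _ = (-X : A[X]) ^ k := by rw [h2, map_pow, map_neg, map_one, ← neg_pow]
  have hgeom : ((1 : A[X]) + X) * (∑ k ∈ range N, (-X : A[X]) ^ k) = 1 - (-X) ^ N := by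
    have h := geom_sum_mul (-X : A[X]) N
    linear_combination -h
  have hgeomP : ((1 : A[X]) + X) * derivative P = 1 - (-X) ^ N := by rw [hDP]; exact hgeom
  have h1u : (1 : A[X]) + u = C (1 + b) * (1 + X) := by
    rw [hu, map_add, C_1]; ring
  have hDu : derivative u = C (1 + b) := by
    rw [hu]; simp
  have key1 : ((1 : A[X]) + X) * derivative (P.comp u) = 1 - (-u) ^ N := by
    rw [derivative_comp, hDu, hDP]
    have hc : ((1 - (-X) ^ N : A[X])).comp u = 1 - (-u) ^ N := by
      simp [sub_comp, pow_comp, neg_comp]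
    rw [← hc, ← hgeom, mul_comp, add_comp, one_comp, X_comp]
    ring_nf
    rw [hu, map_add, C_1]
    ring
  have key2 : ((1 : A[X]) + X) * derivative H = (-X : A[X]) ^ N - (-u) ^ N := by
    rw [hH, derivative_sub, derivative_sub, derivative_C, sub_zero]
    linear_combination key1 - hgeomP
  -- divisibility of the remainder
  have hdvd : (X : A[X]) ^ (n + 1) ∣ (-X : A[X]) ^ N - (-u) ^ N := by
    have hmain : (X : A[X]) ^ (n + 1) ∣ u ^ N - X ^ N := by
      have hu' : u = X + C b * (1 + X) := by rw [hu, map_add, C_1]; ring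
      rw [hu', add_pow, Finset.sum_range_succ]
      simp only [Nat.sub_self, pow_zero, mul_one, Nat.choose_self, Nat.cast_one]
      rw [add_sub_cancel_right]
      apply Finset.dvd_sum
      intro i hi
      by_cases hcase : n ≤ N - i
      · have hCb : (C b * (1 + X)) ^ (N - i) = 0 := by
          rw [mul_pow, ← map_pow, pow_eq_zero_of_le hcase hb, map_zero, zero_mul]
        rw [hCb, mul_zero, zero_mul]
        exact dvd_zero _
      · have hi' : i < N := Finset.mem_range.1 hi
        have hin : n + 1 ≤ i := by omega
        exact dvd_mul_of_dvd_left (dvd_mul_of_dvd_left (pow_dvd_pow X hin) _) _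
    have hrw : (-X : A[X]) ^ N - (-u) ^ N = (-1 : A[X]) ^ N * (X ^ N - u ^ N) := by
      rw [neg_pow u N, neg_pow (X : A[X]) N, ← mul_sub]
    rw [hrw]
    have h5 := dvd_neg.2 hmain
    rw [neg_sub] at h5
    exact h5.mul_left _
  obtain ⟨r, hr⟩ := hdvd
  have key3 : ((1 : A[X]) + X) * derivative H = X ^ (n + 1) * r := by rw [key2, hr]
  -- constant coefficient of H vanishes
  have hH0 : H.coeff 0 = 0 := by
    rw [coeff_zero_eq_eval_zero, hH]
    have hu0 : eval 0 u = b := by rw [hu]; simp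
    rw [eval_sub, eval_sub, eval_C, eval_comp, hu0]
    have hP0 : eval 0 P = 0 := by
      rw [hP, eval_finset_sum]
      apply Finset.sum_eq_zero
      intro k _
      simp
    rw [hP0]
    ring
  -- coefficientwise induction
  have hcoeff : ∀ m, m ≤ n + 1 → H.coeff m = 0 := by
    intro m
    induction m with
    | zero => intro _; exact hH0
    | succ m ih =>
      intro hm
      have ihm : H.coeff m = 0 := ih (by omega)
      have e1 : (((1 : A[X]) + X) * derivative H).coeff m = (X ^ (n+1) * r).coeff m := by
        rw [key3]
      have hRHS : ((X : A[X]) ^ (n + 1) * r).coeff m = 0 := by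
        rw [mul_comm, coeff_mul_X_pow']
        simp only [if_neg (by omega : ¬ n + 1 ≤ m)]
      have hXq : ((X : A[X]) * derivative H).coeff m = 0 := by
        cases m with
        | zero => rw [mul_coeff_zero, coeff_X_zero, zero_mul]
        | succ m' =>
          rw [coeff_X_mul, coeff_derivative, ih (by omega), zero_mul]
      have e2 : (derivative H).coeff m = 0 := by
        have : (derivative H).coeff m + ((X : A[X]) * derivative H).coeff m = 0 := by
          rw [← coeff_add]
          have hsplit : derivative H + X * derivative H = ((1 : A[X]) + X) * derivative H := by
            ring
          rw [hsplit, e1, hRHS]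
        rw [hXq, add_zero] at this
        exact this
      have e3 : H.coeff (m + 1) * ((m : A) + 1) = 0 := by
        rw [← coeff_derivative]
        exact_mod_cast e2
      have hcast : ((m : A) + 1) = algebraMap K A ((m : K) + 1) := by
        simp
      have hne : ((m : K) + 1) ≠ 0 := Nat.cast_add_one_ne_zero m
      have h4 : H.coeff (m+1) * ((m:A)+1) * algebraMap K A ((m:K)+1)⁻¹ = 0 := by
        rw [e3, zero_mul]
      rwa [hcast, mul_assoc, ← map_mul, mul_inv_cancel₀ hne, map_one, mul_one] at h4
  -- evaluate at a
  have heval : H.eval a = 0 := by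
    rw [eval_eq_sum_range]
    apply Finset.sum_eq_zero
    intro i _
    by_cases hi : i ≤ n + 1
    · rw [hcoeff i hi, zero_mul]
    · rw [pow_eq_zero_of_le (by omega : n ≤ i) ha, mul_zero]
  have hfin : P.eval ((1 + b) * a + b) - P.eval a - P.eval b = 0 := by
    have hua : eval a u = (1 + b) * a + b := by rw [hu]; simp
    rw [hH, eval_sub, eval_sub, eval_C, eval_comp, hua] at heval
    exact heval
  rw [hPeval, hPeval, hPeval] at hfin
  have harr : a + b + a * b = (1 + b) * a + b := by ring
  rw [harr]
  linear_combination hfin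

lemma logSum_add_of_commute {A : Type*} [Ring A] [Algebra K A] (a b : A) (hab : Commute a b)
    (n : ℕ) (ha : a ^ n = 0) (hb : b ^ n = 0) :
    ∑ k ∈ range (2 * n), ((-1 : K) ^ k * ((k : K) + 1)⁻¹) • (a + b + a * b) ^ (k + 1) =
      ∑ k ∈ range (2 * n), ((-1 : K) ^ k * ((k : K) + 1)⁻¹) • a ^ (k + 1) +
        ∑ k ∈ range (2 * n), ((-1 : K) ^ k * ((k : K) + 1)⁻¹) • b ^ (k + 1) := by
  set S := Algebra.adjoin K ({a, b} : Set A) with hS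
  have hcomm : ∀ x ∈ ({a, b} : Set A), ∀ y ∈ ({a, b} : Set A), x * y = y * x := by
    rintro x (rfl | rfl) y (rfl | rfl) <;> first | rfl | exact hab | exact hab.symm
  letI : CommRing S := Algebra.adjoinCommRingOfComm K hcomm
  have haS : a ∈ S := Algebra.subset_adjoin (by simp)
  have hbS : b ∈ S := Algebra.subset_adjoin (by simp)
  set a' : S := ⟨a, haS⟩ with ha'
  set b' : S := ⟨b, hbS⟩ with hb'
  have ha'n : a' ^ n = 0 := by
    ext
    rw [SubmonoidClass.coe_pow]
    exact ha
  have hb'n : b' ^ n = 0 := by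
    ext
    rw [SubmonoidClass.coe_pow]
    exact hb
  have key := logSum_add_of_comm (K := K) a' b' n ha'n hb'n
  have hval := congrArg (S.val) key
  simp only [map_add, map_sum, map_smul, map_pow, map_mul, Subalgebra.val_apply] at hval
  exact hval

end Aux

/-- If `g` is a group-like element of a bialgebra `H` over a field `K`
of characteristic zero and `g - 1` is nilpotent (`(g-1) ^ n = 0`), then
`log g = Σ_{k≥1} (-1)^{k+1} (g-1)^k / k` (a finite sum, written below as a sum over
`k < n` of the terms of index `k+1`) is primitive:
`Δ(log g) = log g ⊗ 1 + 1 ⊗ log g`. -/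
theorem log_of_unipotent_groupLike_is_primitive
    {K H : Type*} [Field K] [CharZero K] [Ring H] [Bialgebra K H]
    (g : H) (hg : Coalgebra.comul (R := K) g = g ⊗ₜ[K] g)
    (hgε : Coalgebra.counit (R := K) g = 1)
    (n : ℕ) (hn : (g - 1) ^ n = 0) :
    Coalgebra.comul (R := K)
        (∑ k ∈ Finset.range n, ((-1 : K) ^ k * ((k : K) + 1)⁻¹) • (g - 1) ^ (k + 1)) =
      (∑ k ∈ Finset.range n, ((-1 : K) ^ k * ((k : K) + 1)⁻¹) • (g - 1) ^ (k + 1)) ⊗ₜ[K] 1 +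
        1 ⊗ₜ[K]
          (∑ k ∈ Finset.range n, ((-1 : K) ^ k * ((k : K) + 1)⁻¹) • (g - 1) ^ (k + 1)) := by
  set Δ := Bialgebra.comulAlgHom K H with hΔ
  set u : H := g - 1 with hu
  set a : H ⊗[K] H := u ⊗ₜ[K] 1 with hadef
  set b : H ⊗[K] H := (1 : H) ⊗ₜ[K] u with hbdef
  have hab : Commute a b := by
    simp only [Commute, SemiconjBy, hadef, hbdef, Algebra.TensorProduct.tmul_mul_tmul,
      one_mul, mul_one]
  have haN : a ^ n = 0 := by
    rw [hadef, Algebra.TensorProduct.tmul_pow, hn, TensorProduct.zero_tmul]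
  have hbN : b ^ n = 0 := by
    rw [hbdef, Algebra.TensorProduct.tmul_pow, hn, TensorProduct.tmul_zero]
  have hΔg : Δ g = g ⊗ₜ[K] g := hg
  have hΔu : Δ u = a + b + a * b := by
    rw [hu, map_sub, map_one, hΔg, hadef, hbdef, Algebra.TensorProduct.tmul_mul_tmul,
      one_mul, mul_one, Algebra.TensorProduct.one_def]
    rw [TensorProduct.sub_tmul, TensorProduct.tmul_sub, TensorProduct.sub_tmul,
      TensorProduct.tmul_sub, TensorProduct.tmul_sub]
    abel
  have hcN : (Δ u) ^ n = 0 := by rw [← map_pow, hn, map_zero]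
  have hLHS : Coalgebra.comul (R := K)
      (∑ k ∈ Finset.range n, ((-1 : K) ^ k * ((k : K) + 1)⁻¹) • u ^ (k + 1)) =
      ∑ k ∈ Finset.range n, ((-1 : K) ^ k * ((k : K) + 1)⁻¹) • (Δ u) ^ (k + 1) := by
    rw [show Coalgebra.comul (R := K) (A := H) = Δ.toLinearMap from rfl]
    rw [map_sum]
    refine Finset.sum_congr rfl fun k _ => ?_
    rw [map_smul]
    simp only [AlgHom.toLinearMap_apply, map_pow]
  rw [hLHS]
  rw [← logSum_trunc (K := K) (Δ u) hcN (by omega : n ≤ 2 * n)]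
  rw [hΔu, logSum_add_of_commute (K := K) a b hab n haN hbN]
  rw [logSum_trunc (K := K) a haN (by omega : n ≤ 2 * n),
    logSum_trunc (K := K) b hbN (by omega : n ≤ 2 * n)]
  congr 1
  · rw [TensorProduct.sum_tmul]
    refine Finset.sum_congr rfl fun k _ => ?_
    rw [hadef, Algebra.TensorProduct.tmul_pow, one_pow, TensorProduct.smul_tmul']
  · rw [TensorProduct.tmul_sum]
    refine Finset.sum_congr rfl fun k _ => ?_
    rw [hbdef, Algebra.TensorProduct.tmul_pow, one_pow, TensorProduct.tmul_smul]
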